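/- arXiv:1707.02417 — 7 statements merged into one kernel-verified Lean document; each statement's English description precedes it below -/
import Mathlib

section
/- For all natural numbers n and k with 0 ≤ k ≤ n-1, Σ_{m=k}^{n-1} (-1)^{n+m} (2m+1)/((n-m)(n+m+1)) = -H_{2n} + H_{n+k} + H_n - H_{n-k} - H_{⌊(n+k)/2⌋} + H_{⌊(n-k)/2⌋}. -/
/-- The `N`-th harmonic number `H_N = ∑_{k=1}^N 1/k` (with `H_0 = 0`). -/
noncomputable def H (N : ℕ) : ℝ := ∑ k ∈ Finset.Icc 1 N, (1 : ℝ) / k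

lemma H_zero : H 0 = 0 := by simp [H]

lemma H_succ (N : ℕ) : H (N + 1) = H N + 1 / (N + 1) := by
  unfold H
  rw [Finset.sum_Icc_succ_top (by omega)]
  push_cast
  ring

lemma aux : ∀ j k n : ℕ, k + j = n →
    ∑ m ∈ Finset.Ico k n,
        (-1 : ℝ) ^ (n + m) * (2 * m + 1) / (((n : ℝ) - m) * ((n : ℝ) + m + 1)) =
      -H (2 * n) + H (n + k) + H n - H (n - k)
        - H ((n + k) / 2) + H ((n - k) / 2) := by
  intro j
  induction j with
  | zero =>
    intro k n h
    have hk : k = n := by omega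
    subst hk
    have : (k + k) / 2 = k := by omega
    simp [Nat.sub_self, two_mul, H_zero, this]
  | succ j ih =>
    intro k n h
    have hkn : k < n := by omega
    rw [Finset.sum_eq_sum_Ico_succ_bot hkn, ih (k + 1) n (by omega)]
    have e1 : H (n + (k + 1)) = H (n + k) + 1 / ((n : ℝ) + k + 1) := by
      have : n + (k + 1) = (n + k) + 1 := by omega
      rw [this, H_succ]; push_cast; ring
    have e2 : H (n - k) = H (n - (k + 1)) + 1 / ((n : ℝ) - k) := by
      have h1 : n - k = (n - (k + 1)) + 1 := by omega
      rw [h1, H_succ]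
      have : ((n - (k + 1) : ℕ) : ℝ) + 1 = (n : ℝ) - k := by
        have : (((n - (k+1) : ℕ)) : ℝ) = (n : ℝ) - (k + 1) := by
          push_cast [Nat.cast_sub (by omega : k + 1 ≤ n)]; ring
        rw [this]; ring
      rw [this]
    rcases Nat.even_or_odd j with ⟨t, ht⟩ | ⟨t, ht⟩
    · -- j = 2t, n = k + 2t + 1, n+k odd
      have hn : n = k + 2 * t + 1 := by omega
      have hs : (-1 : ℝ) ^ (n + k) = -1 :=
        Odd.neg_one_pow ⟨k + t, by omega⟩
      have e3 : H ((n + (k + 1)) / 2) = H ((n + k) / 2) + 1 / ((k : ℝ) + t + 1) := by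
        have h1 : (n + (k + 1)) / 2 = (k + t) + 1 := by omega
        have h2 : (n + k) / 2 = k + t := by omega
        rw [h1, h2, H_succ]; push_cast; ring
      have e4 : H ((n - (k + 1)) / 2) = H ((n - k) / 2) := by
        have h1 : (n - (k + 1)) / 2 = t := by omega
        have h2 : (n - k) / 2 = t := by omega
        rw [h1, h2]
      rw [e1, e2, e3, e4, hs]
      have hc : (n : ℝ) = (k : ℝ) + 2 * t + 1 := by rw [hn]; push_cast; ring
      rw [hc]
      have ht0 : (0 : ℝ) ≤ t := Nat.cast_nonneg t
      have d1 : (k : ℝ) + 2 * t + 1 - k ≠ 0 := by intro hc; linarith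
      have d2 : (k : ℝ) + 2 * t + 1 + k + 1 ≠ 0 := by positivity
      have d3 : (k : ℝ) + t + 1 ≠ 0 := by positivity
      field_simp
      ring
    · -- j = 2t+1, n = k + 2t + 2, n+k even
      have hn : n = k + 2 * t + 2 := by omega
      have hs : (-1 : ℝ) ^ (n + k) = 1 :=
        Even.neg_one_pow ⟨k + t + 1, by omega⟩
      have e3 : H ((n + (k + 1)) / 2) = H ((n + k) / 2) := by
        rw [show (n + (k + 1)) / 2 = (n + k) / 2 by omega]
      have e4 : H ((n - k) / 2) = H ((n - (k + 1)) / 2) + 1 / ((t : ℝ) + 1) := by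
        have h1 : (n - k) / 2 = t + 1 := by omega
        have h2 : (n - (k + 1)) / 2 = t := by omega
        rw [h1, h2, H_succ]
      rw [e1, e2, e3, e4, hs]
      have hc : (n : ℝ) = (k : ℝ) + 2 * t + 2 := by rw [hn]; push_cast; ring
      rw [hc]
      have ht0 : (0 : ℝ) ≤ t := Nat.cast_nonneg t
      have d1 : (k : ℝ) + 2 * t + 2 - k ≠ 0 := by intro hc; linarith
      have d2 : (k : ℝ) + 2 * t + 2 + k + 1 ≠ 0 := by positivity
      have d3 : (t : ℝ) + 1 ≠ 0 := by positivity
      field_simp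
      ring

/-- For natural numbers `0 ≤ k ≤ n-1`,
`∑_{m=k}^{n-1} (-1)^{n+m} (2m+1)/((n-m)(n+m+1))
  = -H_{2n} + H_{n+k} + H_n - H_{n-k} - H_{⌊(n+k)/2⌋} + H_{⌊(n-k)/2⌋}`. -/
theorem alternating_partial_fraction_sum (n k : ℕ) (hk : k ≤ n - 1) (hn : 1 ≤ n) :
    ∑ m ∈ Finset.Ico k n,
        (-1 : ℝ) ^ (n + m) * (2 * m + 1) / (((n : ℝ) - m) * ((n : ℝ) + m + 1)) =
      -H (2 * n) + H (n + k) + H n - H (n - k)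
        - H ((n + k) / 2) + H ((n - k) / 2) := by
  exact aux (n - k) k n (by omega)
end

section
/- For every natural number n, Σ_{k=0}^{n-1} (-1)^{n+k} (2k+1)/((n-k)(n+k+1)) = -(H_{2n} - H_n). -/
lemma alt_key (N : ℕ) :
    ∑ m ∈ Finset.range (2 * N), (-1 : ℝ) ^ (m + 1) / ((m : ℝ) + 1) = H N - H (2 * N) := by
  induction N with
  | zero => simp [H]
  | succ N ih =>
    have h2 : 2 * (N + 1) = (2 * N + 1) + 1 := by ring
    rw [h2, Finset.sum_range_succ, Finset.sum_range_succ, ih, H_succ, H_succ, H_succ]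
    have hs1 : (-1 : ℝ) ^ (2 * N + 1) = -1 := Odd.neg_one_pow ⟨N, by ring⟩
    have hs2 : (-1 : ℝ) ^ (2 * N + 1 + 1) = 1 := Even.neg_one_pow ⟨N + 1, by ring⟩
    rw [hs1, hs2]
    have h1 : (2 * (N : ℝ) + 1) ≠ 0 := by positivity
    have h3 : ((N : ℝ) + 1) ≠ 0 := by positivity
    push_cast
    field_simp
    ring

/-- For every natural number `n`,
`∑_{k=0}^{n-1} (-1)^{n+k} (2k+1)/((n-k)(n+k+1)) = -(H_{2n} - H_n)`. -/
theorem alternating_sum_eq_neg_harmonic_diff (n : ℕ) :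
    ∑ k ∈ Finset.range n,
        (-1 : ℝ) ^ (n + k) * (2 * k + 1) / (((n : ℝ) - k) * ((n : ℝ) + k + 1)) =
      -(H (2 * n) - H n) := by
  have hterm : ∀ k ∈ Finset.range n,
      (-1 : ℝ) ^ (n + k) * (2 * k + 1) / (((n : ℝ) - k) * ((n : ℝ) + k + 1))
        = (-1 : ℝ) ^ (n + k) / ((n : ℝ) - k) + (-1 : ℝ) ^ ((n + k) + 1) / ((n : ℝ) + k + 1) := by
    intro k hk
    have hk' : k < n := Finset.mem_range.mp hk
    have h1 : ((n : ℝ) - k) ≠ 0 := by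
      have : (k : ℝ) < n := by exact_mod_cast hk'
      linarith
    have h2 : ((n : ℝ) + k + 1) ≠ 0 := by positivity
    rw [pow_succ]
    field_simp
    ring
  rw [Finset.sum_congr rfl hterm, Finset.sum_add_distrib]
  have hA : ∑ k ∈ Finset.range n, (-1 : ℝ) ^ (n + k) / ((n : ℝ) - k)
      = ∑ k ∈ Finset.range n, (-1 : ℝ) ^ (k + 1) / ((k : ℝ) + 1) := by
    rw [← Finset.sum_range_reflect (fun k => (-1 : ℝ) ^ (k + 1) / ((k : ℝ) + 1)) n]
    apply Finset.sum_congr rfl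
    intro k hk
    have hk' : k < n := Finset.mem_range.mp hk
    have hcast : ((n - 1 - k : ℕ) : ℝ) = (n : ℝ) - 1 - k := by
      have h : n - 1 - k = n - (1 + k) := by omega
      rw [h, Nat.cast_sub (by omega : 1 + k ≤ n)]
      push_cast
      ring
    have hsign : (-1 : ℝ) ^ (n + k) = (-1 : ℝ) ^ ((n - 1 - k) + 1) := by
      have h : n + k = ((n - 1 - k) + 1) + 2 * k := by omega
      rw [h, pow_add, pow_mul]
      norm_num
    rw [hsign, hcast]
    ring_nf
  have hB : ∑ k ∈ Finset.range n, (-1 : ℝ) ^ ((n + k) + 1) / ((n : ℝ) + k + 1)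
      = ∑ m ∈ Finset.Ico n (2 * n), (-1 : ℝ) ^ (m + 1) / ((m : ℝ) + 1) := by
    rw [Finset.sum_Ico_eq_sum_range]
    have h : 2 * n - n = n := by omega
    rw [h]
    apply Finset.sum_congr rfl
    intro k _
    push_cast
    ring_nf
  rw [hA, hB]
  have hsplit : ∑ k ∈ Finset.range n, (-1 : ℝ) ^ (k + 1) / ((k : ℝ) + 1)
      + ∑ m ∈ Finset.Ico n (2 * n), (-1 : ℝ) ^ (m + 1) / ((m : ℝ) + 1)
      = ∑ m ∈ Finset.range (2 * n), (-1 : ℝ) ^ (m + 1) / ((m : ℝ) + 1) := by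
    rw [Finset.range_eq_Ico]
    rw [Finset.sum_Ico_consecutive (fun m : ℕ => (-1 : ℝ) ^ (m + 1) / ((m : ℝ) + 1)) (by omega : 0 ≤ n) (by omega : n ≤ 2 * n), Finset.range_eq_Ico]
  rw [hsplit, alt_key]
  ring
end

section
/- For every natural number n, Σ_{k=0}^{n-1} (-1)^k (2k+1)/((n-k)(n+k+1)) · ( Σ_{m=k}^{n-1} (-1)^m (2m+1)/((n-m)(n+m+1)) ) = (1/2)(H_{2n} - H_n)^2 - H_{2n}/(2n+1) + (1/2) Σ_{k=1}^{2n} 1/k^2. -/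
open Finset

/-- Triangle-sum identity. -/
lemma tri_sum (f : ℕ → ℝ) (n : ℕ) :
    ∑ k ∈ Finset.range n, f k * ∑ m ∈ Finset.Ico k n, f m
      = (1/2) * ((∑ k ∈ Finset.range n, f k)^2 + ∑ k ∈ Finset.range n, (f k)^2) := by
  induction n with
  | zero => simp
  | succ n ih =>
    rw [Finset.sum_range_succ, Finset.sum_range_succ, Finset.sum_range_succ (f := fun k => (f k)^2)]
    have h1 : ∀ k ∈ Finset.range n, f k * ∑ m ∈ Finset.Ico k (n+1), f m
        = f k * ∑ m ∈ Finset.Ico k n, f m + f k * f n := by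
      intro k hk
      rw [Finset.sum_Ico_succ_top (Nat.le_of_lt (Finset.mem_range.mp hk)) f]
      ring
    rw [Finset.sum_congr rfl h1, Finset.sum_add_distrib, ih, ← Finset.sum_mul]
    rw [Nat.Ico_succ_singleton, Finset.sum_singleton]
    ring

lemma Icc_to_range (N : ℕ) (g : ℝ → ℝ) :
    ∑ k ∈ Finset.Icc 1 N, g k = ∑ k ∈ Finset.range N, g ((k : ℝ) + 1) := by
  rw [← Finset.Ico_add_one_right_eq_Icc, Finset.sum_Ico_eq_sum_range]
  norm_num
  exact Finset.sum_congr rfl fun k _ => by push_cast [add_comm]; ring_nf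

/-- Splitting a sum over `1..2n` into reflected and shifted parts. -/
lemma split_sum (n : ℕ) (g : ℝ → ℝ) :
    (∑ k ∈ Finset.range n, g ((n : ℝ) - k)) + (∑ k ∈ Finset.range n, g ((n : ℝ) + k + 1))
      = ∑ k ∈ Finset.range (2*n), g ((k : ℝ) + 1) := by
  have h1 : ∑ k ∈ Finset.range n, g ((n : ℝ) - k) = ∑ k ∈ Finset.range n, g ((k : ℝ) + 1) := by
    rw [← Finset.sum_range_reflect (fun k => g ((n : ℝ) - k)) n]
    refine Finset.sum_congr rfl fun k hk => ?_
    have hk' : k < n := Finset.mem_range.mp hk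
    have : ((n - 1 - k : ℕ) : ℝ) = (n : ℝ) - 1 - k := by
      have : n - 1 - k = n - (1 + k) := by omega
      rw [this, Nat.cast_sub (by omega)]
      push_cast; ring
    rw [this]; ring_nf
  have h2 : (2*n) = n + n := by ring
  rw [h2, Finset.sum_range_add, h1]
  congr 1
  refine Finset.sum_congr rfl fun k _ => ?_
  push_cast; ring_nf

lemma Hsucc (n : ℕ) : H (n+1) = H n + 1/((n:ℝ)+1) := by
  unfold H
  rw [Finset.sum_Icc_succ_top (by omega)]
  push_cast; ring

/-- Alternating harmonic partial sum. -/
lemma altH (n : ℕ) :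
    ∑ k ∈ Finset.range (2*n), (-1 : ℝ)^k * (1/((k:ℝ)+1)) = H (2*n) - H n := by
  induction n with
  | zero => simp [H]
  | succ n ih =>
    have h2 : 2*(n+1) = (2*n+1)+1 := by ring
    rw [h2, Finset.sum_range_succ, Finset.sum_range_succ, ih]
    have e1 : H (2*n+1+1) = H (2*n) + 1/(((2*n:ℕ):ℝ)+1) + 1/(((2*n+1:ℕ):ℝ)+1) := by
      rw [Hsucc, Hsucc]
    rw [e1, Hsucc]
    have hs1 : (-1:ℝ)^(2*n) = 1 := by
      rw [pow_mul]; norm_num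
    have hs2 : (-1:ℝ)^(2*n+1) = -1 := by
      rw [pow_succ, hs1]; norm_num
    rw [hs1, hs2]
    have hne1 : ((2*n:ℕ):ℝ) + 1 ≠ 0 := by positivity
    have hne2 : ((2*n+1:ℕ):ℝ) + 1 ≠ 0 := by positivity
    have hne3 : ((n:ℕ):ℝ) + 1 ≠ 0 := by positivity
    push_cast at *
    field_simp
    ring

/-- For every natural number `n`,
`∑_{k=0}^{n-1} (-1)^k (2k+1)/((n-k)(n+k+1)) ⬝ (∑_{m=k}^{n-1} (-1)^m (2m+1)/((n-m)(n+m+1)))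
  = (1/2)(H_{2n} - H_n)^2 - H_{2n}/(2n+1) + (1/2) ∑_{k=1}^{2n} 1/k²`. -/
theorem double_alternating_sum (n : ℕ) :
    ∑ k ∈ Finset.range n,
        (-1 : ℝ) ^ k * (2 * k + 1) / (((n : ℝ) - k) * ((n : ℝ) + k + 1)) *
          (∑ m ∈ Finset.Ico k n,
            (-1 : ℝ) ^ m * (2 * m + 1) / (((n : ℝ) - m) * ((n : ℝ) + m + 1))) =
      (1 / 2) * (H (2 * n) - H n) ^ 2 - H (2 * n) / (2 * n + 1)
        + (1 / 2) * ∑ k ∈ Finset.Icc 1 (2 * n), (1 : ℝ) / (k : ℝ) ^ 2 := by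
  rcases Nat.eq_zero_or_pos n with hn0 | hn
  · subst hn0; simp [H]
  set f : ℕ → ℝ := fun k => (-1 : ℝ) ^ k * (2 * k + 1) / (((n : ℝ) - k) * ((n : ℝ) + k + 1))
    with hf
  rw [tri_sum f n]
  -- basic nonvanishing facts
  have hd : ∀ k ∈ Finset.range n, ((n:ℝ) - k ≠ 0) ∧ ((n:ℝ) + k + 1 ≠ 0) := by
    intro k hk
    have hk' : (k : ℝ) < n := by exact_mod_cast Finset.mem_range.mp hk
    constructor
    · intro h; linarith
    · positivity
  have h2n1 : (2*(n:ℝ)+1) ≠ 0 := by positivity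
  -- the alternating harmonic value
  have halt := altH n
  -- P : alternating sum up to n ; B : shifted alternating sum
  set P : ℝ := ∑ k ∈ Finset.range n, (-1:ℝ)^k * (1/((k:ℝ)+1)) with hP
  set B : ℝ := ∑ k ∈ Finset.range n, (-1:ℝ)^k * (1/((n:ℝ)+k+1)) with hB
  -- split the alternating harmonic sum
  have hsplit : H (2*n) - H n = P + (-1:ℝ)^n * B := by
    rw [← halt]
    have h2 : 2*n = n + n := by ring
    rw [h2, Finset.sum_range_add, hP, hB, Finset.mul_sum]
    congr 1
    refine Finset.sum_congr rfl fun k _ => ?_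
    rw [pow_add]
    push_cast; ring
  -- evaluate S
  have hS : ∑ k ∈ Finset.range n, f k = (-1:ℝ)^(n+1) * (H (2*n) - H n) := by
    have key : ∀ k ∈ Finset.range n,
        f k = (-1:ℝ)^k * (1/((n:ℝ)-k)) - (-1:ℝ)^k * (1/((n:ℝ)+k+1)) := by
      intro k hk
      obtain ⟨h1, h2⟩ := hd k hk
      rw [hf]
      field_simp
      ring
    rw [Finset.sum_congr rfl key, Finset.sum_sub_distrib]
    have hA : ∑ k ∈ Finset.range n, (-1:ℝ)^k * (1/((n:ℝ)-k)) = (-1:ℝ)^(n-1) * P := by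
      rw [← Finset.sum_range_reflect (fun k => (-1:ℝ)^k * (1/((n:ℝ)-k))) n, hP,
        Finset.mul_sum]
      refine Finset.sum_congr rfl fun k hk => ?_
      have hk' : k < n := Finset.mem_range.mp hk
      have hc : ((n - 1 - k : ℕ) : ℝ) = (n : ℝ) - 1 - k := by
        rw [show n - 1 - k = n - (1 + k) by omega, Nat.cast_sub (by omega)]
        push_cast; ring
      have hsgn : (-1:ℝ)^(n-1-k) = (-1:ℝ)^(n-1) * (-1:ℝ)^k := by
        have h : (n-1-k) + k = n - 1 := by omega
        have := pow_add (-1:ℝ) (n-1-k) k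
        rw [h] at this
        have hkk : (-1:ℝ)^k * (-1:ℝ)^k = 1 := by
          rw [← pow_add, ← two_mul, pow_mul]; norm_num
        calc (-1:ℝ)^(n-1-k) = (-1:ℝ)^(n-1-k) * ((-1:ℝ)^k * (-1:ℝ)^k) := by rw [hkk]; ring
          _ = (-1:ℝ)^(n-1) * (-1:ℝ)^k := by rw [← mul_assoc, ← pow_add, h]
      rw [hsgn, hc]
      ring_nf
    rw [hA, ← hB]
    have hsgn2 : (-1:ℝ)^(n-1) = (-1:ℝ)^(n+1) := by
      have h : n + 1 = (n-1) + 2 := by omega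
      rw [h, pow_add]; norm_num
    rw [hsgn2, hsplit]
    have h2n : (-1:ℝ)^(n+1) * (-1:ℝ)^n = -1 := by
      rw [← pow_add, show n+1+n = 2*n+1 by ring, pow_succ, pow_mul]; norm_num
    linear_combination (-B) * h2n
  -- evaluate the sum of squares
  have hQ : ∑ k ∈ Finset.range n, (f k)^2
      = (∑ k ∈ Finset.Icc 1 (2*n), (1:ℝ)/(k:ℝ)^2) - (2/(2*(n:ℝ)+1)) * H (2*n) := by
    have key2 : ∀ k ∈ Finset.range n, (f k)^2
        = ((1/((n:ℝ)-k)^2) - (2/(2*(n:ℝ)+1)) * (1/((n:ℝ)-k)))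
          + ((1/((n:ℝ)+k+1)^2) - (2/(2*(n:ℝ)+1)) * (1/((n:ℝ)+k+1))) := by
      intro k hk
      obtain ⟨h1, h2⟩ := hd k hk
      rw [hf]
      have hsq : ((-1:ℝ)^k)^2 = 1 := by
        rw [← pow_mul, mul_comm, pow_mul]; norm_num
      rw [div_pow, mul_pow, hsq, one_mul]
      field_simp
      ring
    rw [Finset.sum_congr rfl key2, Finset.sum_add_distrib]
    rw [split_sum n (fun x => 1/x^2 - (2/(2*(n:ℝ)+1)) * (1/x))]
    rw [Finset.sum_sub_distrib, ← Finset.mul_sum]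
    rw [← Icc_to_range (2*n) (fun x => 1/x^2), ← Icc_to_range (2*n) (fun x => 1/x)]
    unfold H
    ring_nf
  rw [hS, hQ]
  have hsq : ((-1:ℝ)^(n+1))^2 = 1 := by
    rw [← pow_mul, mul_comm, pow_mul]; norm_num
  rw [mul_pow, hsq, one_mul]
  ring
end

section
/- For every natural number n, Σ_{k=0}^{n-1} (2k+1)^2 / ((n-k)^2 (n+k+1)^2) = Σ_{k=1}^{2n} 1/k^2 - 2 H_{2n}/(2n+1). -/
lemma reindex_lower (n : ℕ) (F : ℝ → ℝ) :
    ∑ k ∈ Finset.range n, F ((n : ℝ) - k) = ∑ j ∈ Finset.Ioc 0 n, F (j : ℝ) := by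
  apply Finset.sum_nbij' (fun k => n - k) (fun j => n - j)
  · intro k hk
    simp only [Finset.mem_range] at hk
    simp only [Finset.mem_Ioc]
    omega
  · intro j hj
    simp only [Finset.mem_Ioc] at hj
    simp only [Finset.mem_range]
    omega
  · intro k hk; simp only [Finset.mem_range] at hk; omega
  · intro j hj; simp only [Finset.mem_Ioc] at hj; omega
  · intro k hk
    simp only [Finset.mem_range] at hk
    congr 1
    have : ((n - k : ℕ) : ℝ) = (n : ℝ) - k := by
      push_cast [Nat.cast_sub hk.le]; ring
    rw [this]

lemma reindex_upper (n : ℕ) (F : ℝ → ℝ) :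
    ∑ k ∈ Finset.range n, F ((n : ℝ) + k + 1) = ∑ j ∈ Finset.Ioc n (2 * n), F (j : ℝ) := by
  apply Finset.sum_nbij' (fun k => n + k + 1) (fun j => j - n - 1)
  · intro k hk; simp only [Finset.mem_range] at hk; simp only [Finset.mem_Ioc]; omega
  · intro j hj; simp only [Finset.mem_Ioc] at hj; simp only [Finset.mem_range]; omega
  · intro k hk; omega
  · intro j hj; simp only [Finset.mem_Ioc] at hj; omega
  · intro k hk
    congr 1
    push_cast
    ring

/-- For every natural number `n`,
`∑_{k=0}^{n-1} (2k+1)²/((n-k)²(n+k+1)²) = ∑_{k=1}^{2n} 1/k² - 2 H_{2n}/(2n+1)`. -/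
theorem sum_of_squares_partial_fractions (n : ℕ) :
    ∑ k ∈ Finset.range n,
        (2 * (k : ℝ) + 1) ^ 2 / (((n : ℝ) - k) ^ 2 * ((n : ℝ) + k + 1) ^ 2) =
      (∑ k ∈ Finset.Icc 1 (2 * n), (1 : ℝ) / (k : ℝ) ^ 2)
        - 2 * H (2 * n) / (2 * n + 1) := by
  set F : ℝ → ℝ := fun x => 1 / x ^ 2 - 2 / ((2 * n + 1) * x) with hF
  have key : ∀ k ∈ Finset.range n,
      (2 * (k : ℝ) + 1) ^ 2 / (((n : ℝ) - k) ^ 2 * ((n : ℝ) + k + 1) ^ 2)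
        = F ((n : ℝ) - k) + F ((n : ℝ) + k + 1) := by
    intro k hk
    simp only [Finset.mem_range] at hk
    have hk' : (k : ℝ) < n := by exact_mod_cast hk
    have ha : ((n : ℝ) - k) ≠ 0 := by linarith
    have hb : ((n : ℝ) + k + 1) ≠ 0 := by positivity
    have h2 : (2 * (n : ℝ) + 1) ≠ 0 := by positivity
    simp only [hF]
    field_simp
    ring
  rw [Finset.sum_congr rfl key, Finset.sum_add_distrib, reindex_lower n F, reindex_upper n F,
    Finset.sum_Ioc_consecutive _ (Nat.zero_le n) (by omega : n ≤ 2 * n)]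
  have hIcc : Finset.Ioc 0 (2 * n) = Finset.Icc 1 (2 * n) := by
    rw [← Finset.Icc_add_one_left_eq_Ioc]
    rfl
  rw [hIcc]
  simp only [hF]
  rw [Finset.sum_sub_distrib, H]
  congr 1
  rw [Finset.mul_sum, Finset.sum_div]
  apply Finset.sum_congr rfl
  intro j hj
  simp only [Finset.mem_Icc] at hj
  have hj' : (j : ℝ) ≠ 0 := by
    have : 0 < j := by omega
    exact_mod_cast this.ne'
  have h2 : (2 * (n : ℝ) + 1) ≠ 0 := by positivity
  field_simp
end

section
/- For every natural number n, Σ_{k=0}^{n-1} (-1)^{n+k} (2n+1)(2k+1) / ((n-k)^2 (n+k+1)^2) = (1/2) Σ_{k=1}^{n} 1/k^2 - Σ_{k=1}^{2n} 1/k^2. -/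
lemma altA (n : ℕ) : ∑ j ∈ Finset.Icc 1 (2*n), (-1:ℝ)^j / (j:ℝ)^2
    = (1/2) * (∑ k ∈ Finset.Icc 1 n, (1:ℝ)/(k:ℝ)^2)
      - ∑ k ∈ Finset.Icc 1 (2*n), (1:ℝ)/(k:ℝ)^2 := by
  induction n with
  | zero => simp
  | succ n ih =>
    rw [show 2*(n+1) = (2*n+1)+1 from by ring]
    rw [Finset.sum_Icc_succ_top (by omega : 1 ≤ 2*n+1+1),
        Finset.sum_Icc_succ_top (by omega : 1 ≤ 2*n+1),
        Finset.sum_Icc_succ_top (by omega : 1 ≤ 2*n+1+1),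
        Finset.sum_Icc_succ_top (by omega : 1 ≤ 2*n+1),
        Finset.sum_Icc_succ_top (by omega : 1 ≤ n+1),
        ih]
    have e1 : (-1:ℝ)^(2*n+1) = -1 := Odd.neg_one_pow ⟨n, by ring⟩
    have e2 : (-1:ℝ)^(2*n+1+1) = 1 := Even.neg_one_pow ⟨n+1, by ring⟩
    rw [e1, e2]
    have hn : ((n:ℝ)+1) ≠ 0 := by positivity
    have h1 : (2*(n:ℝ)+1) ≠ 0 := by positivity
    have h2 : (2*(n:ℝ)+2) ≠ 0 := by positivity
    push_cast
    field_simp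
    ring

/-- For every natural number `n`,
`∑_{k=0}^{n-1} (-1)^{n+k} (2n+1)(2k+1)/((n-k)²(n+k+1)²)
  = (1/2) ∑_{k=1}^{n} 1/k² - ∑_{k=1}^{2n} 1/k²`. -/
theorem alternating_sum_of_squares_partial_fractions (n : ℕ) :
    ∑ k ∈ Finset.range n,
        (-1 : ℝ) ^ (n + k) * ((2 * (n : ℝ) + 1) * (2 * (k : ℝ) + 1)) /
          (((n : ℝ) - k) ^ 2 * ((n : ℝ) + k + 1) ^ 2) =
      (1 / 2) * (∑ k ∈ Finset.Icc 1 n, (1 : ℝ) / (k : ℝ) ^ 2)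
        - ∑ k ∈ Finset.Icc 1 (2 * n), (1 : ℝ) / (k : ℝ) ^ 2 := by
  rw [← altA n]
  have hterm : ∀ k ∈ Finset.range n,
      (-1 : ℝ) ^ (n + k) * ((2 * (n : ℝ) + 1) * (2 * (k : ℝ) + 1)) /
          (((n : ℝ) - k) ^ 2 * ((n : ℝ) + k + 1) ^ 2)
        = (-1:ℝ)^(n+k)/((n:ℝ)-k)^2 - (-1:ℝ)^(n+k)/((n:ℝ)+k+1)^2 := by
    intro k hk
    rw [Finset.mem_range] at hk
    have h1 : (n:ℝ) - k ≠ 0 := by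
      have : (k:ℝ) < n := by exact_mod_cast hk
      intro h; nlinarith
    have h2 : (n:ℝ) + k + 1 ≠ 0 := by positivity
    field_simp
    ring
  rw [Finset.sum_congr rfl hterm, Finset.sum_sub_distrib]
  have s1 : ∑ k ∈ Finset.range n, (-1:ℝ)^(n+k)/((n:ℝ)-k)^2
      = ∑ j ∈ Finset.Icc 1 n, (-1:ℝ)^j/(j:ℝ)^2 := by
    apply Finset.sum_nbij' (i := fun k => n - k) (j := fun j => n - j)
    · intro a ha; rw [Finset.mem_range] at ha; rw [Finset.mem_Icc]; omega
    · intro a ha; rw [Finset.mem_Icc] at ha; rw [Finset.mem_range]; omega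
    · intro a ha; rw [Finset.mem_range] at ha; omega
    · intro a ha; rw [Finset.mem_Icc] at ha; omega
    · intro k hk
      rw [Finset.mem_range] at hk
      have hc : ((n - k : ℕ) : ℝ) = (n:ℝ) - k := by
        rw [Nat.cast_sub hk.le]
      rw [hc, show n + k = (n - k) + 2*k from by omega, pow_add, pow_mul]
      simp
  have s2 : ∑ k ∈ Finset.range n, (-1:ℝ)^(n+k)/((n:ℝ)+k+1)^2
      = ∑ j ∈ Finset.Icc (n+1) (2*n), -((-1:ℝ)^j/(j:ℝ)^2) := by
    apply Finset.sum_nbij' (i := fun k => n + k + 1) (j := fun j => j - n - 1)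
    · intro a ha; rw [Finset.mem_range] at ha; rw [Finset.mem_Icc]; omega
    · intro a ha; rw [Finset.mem_Icc] at ha; rw [Finset.mem_range]; omega
    · intro a ha; omega
    · intro a ha; rw [Finset.mem_Icc] at ha; omega
    · intro k hk
      have hc : ((n + k + 1 : ℕ) : ℝ) = (n:ℝ) + k + 1 := by push_cast; ring
      rw [hc, show n + k + 1 = (n + k) + 1 from rfl, pow_succ]
      ring
  rw [s1, s2, Finset.sum_neg_distrib, sub_neg_eq_add]
  rw [show Finset.Icc 1 n = Finset.Ioc 0 n from Finset.Icc_add_one_left_eq_Ioc 0 n,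
      show Finset.Icc (n+1) (2*n) = Finset.Ioc n (2*n) from Finset.Icc_add_one_left_eq_Ioc n (2*n),
      show Finset.Icc 1 (2*n) = Finset.Ioc 0 (2*n) from Finset.Icc_add_one_left_eq_Ioc 0 (2*n)]
  exact Finset.sum_Ioc_consecutive _ (by omega) (by omega)
end

section
/- For every natural number n, the polynomial identity (z-1) dP_n(z)/dz = n P_n(z) + Σ_{k=0}^{n-1} (-1)^{n+k} (2k+1) P_k(z) holds (as an identity of polynomials in z, equivalently for all real z). -/
/-- The Legendre polynomial of degree `n`,
`P_n(z) = 2^{-n} ∑_{k=0}^{n} (binom(n,k))² (z-1)^{n-k} (z+1)^k`, as a function on `ℝ`. -/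
noncomputable def P (n : ℕ) (z : ℝ) : ℝ :=
  (∑ k ∈ Finset.range (n + 1), ((n.choose k : ℝ)) ^ 2 * (z - 1) ^ (n - k) * (z + 1) ^ k) / 2 ^ n

/-- Auxiliary function: `R n z = 2^{1-n} ∑_k binom(n,k)² k (z-1)^{n-k} (z+1)^{k-1}`. -/
noncomputable def R (n : ℕ) (z : ℝ) : ℝ :=
  (∑ k ∈ Finset.range (n + 1),
      ((n.choose k : ℝ)) ^ 2 * k * (z - 1) ^ (n - k) * (z + 1) ^ (k - 1)) * 2 / 2 ^ n

lemma pow_pred_mul (a : ℕ) (x : ℝ) : (a : ℝ) * x ^ (a - 1) * x = a * x ^ a := by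
  cases a with
  | zero => simp
  | succ m => rw [Nat.add_sub_cancel, pow_succ]; push_cast; ring

lemma hasDerivAt_P (n : ℕ) (z : ℝ) : HasDerivAt (P n)
    ((∑ k ∈ Finset.range (n + 1), ((n.choose k : ℝ)) ^ 2 *
      (((n - k : ℕ) : ℝ) * (z - 1) ^ (n - k - 1) * (z + 1) ^ k +
        (k : ℝ) * (z - 1) ^ (n - k) * (z + 1) ^ (k - 1))) / 2 ^ n) z := by
  unfold P
  apply HasDerivAt.div_const
  apply HasDerivAt.fun_sum
  intro k _
  have h1 : HasDerivAt (fun z : ℝ => (z - 1) ^ (n - k))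
      (((n - k : ℕ) : ℝ) * (z - 1) ^ (n - k - 1)) z := by
    simpa using ((hasDerivAt_id z).sub_const 1).fun_pow (n - k)
  have h2 : HasDerivAt (fun z : ℝ => (z + 1) ^ k)
      ((k : ℝ) * (z + 1) ^ (k - 1)) z := by
    simpa using ((hasDerivAt_id z).add_const 1).fun_pow k
  have := (h1.const_mul ((n.choose k : ℝ) ^ 2)).fun_mul h2
  exact this.congr_deriv (by ring)

lemma lemA (n : ℕ) (z : ℝ) : (z - 1) * deriv (P n) z = n * P n z - R n z := by
  rw [(hasDerivAt_P n z).deriv]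
  unfold P R
  rw [← mul_div_assoc, ← mul_div_assoc, ← sub_div]
  congr 1
  rw [Finset.mul_sum, Finset.mul_sum, Finset.sum_mul, ← Finset.sum_sub_distrib]
  apply Finset.sum_congr rfl
  intro k hk
  have hkn : k ≤ n := Nat.lt_succ_iff.mp (Finset.mem_range.mp hk)
  have e1 : ((n - k : ℕ) : ℝ) * (z - 1) ^ (n - k - 1) * (z - 1)
      = ((n - k : ℕ) : ℝ) * (z - 1) ^ (n - k) := pow_pred_mul _ _
  have e2 : (k : ℝ) * (z + 1) ^ (k - 1) * (z + 1) = (k : ℝ) * (z + 1) ^ k :=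
    pow_pred_mul _ _
  have e3 : ((n - k : ℕ) : ℝ) = (n : ℝ) - k := by
    rw [Nat.cast_sub hkn]
  linear_combination ((n.choose k : ℝ) ^ 2 * (z + 1) ^ k) * e1 +
    ((n.choose k : ℝ) ^ 2 * (z - 1) ^ (n - k)) * e2 +
    ((n.choose k : ℝ) ^ 2 * (z - 1) ^ (n - k) * (z + 1) ^ k) * e3

lemma key (n k : ℕ) (hk : k ≤ n) :
    ((k : ℝ) + 1) * ((n + 1).choose (k + 1) : ℝ) ^ 2 + (k : ℝ) * (n.choose k : ℝ) ^ 2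
      = ((k : ℝ) + 1) * (n.choose (k + 1) : ℝ) ^ 2 + (2 * (n : ℝ) + 1) * (n.choose k : ℝ) ^ 2 := by
  have hp : ((n + 1).choose (k + 1) : ℝ) = (n.choose k : ℝ) + (n.choose (k + 1) : ℝ) := by
    rw [Nat.choose_succ_succ]; push_cast; ring
  have hs : (n.choose (k + 1) : ℝ) * ((k : ℝ) + 1) = (n.choose k : ℝ) * ((n : ℝ) - k) := by
    have h : ((n.choose (k + 1) : ℝ)) * (((k : ℕ) + 1 : ℕ) : ℝ)
        = (n.choose k : ℝ) * ((n - k : ℕ) : ℝ) := by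
      exact_mod_cast congrArg (Nat.cast (R := ℝ)) (Nat.choose_succ_right_eq n k)
    push_cast [Nat.cast_sub hk] at h
    linarith
  rw [hp]
  linear_combination 2 * (n.choose k : ℝ) * hs

lemma lemB (n : ℕ) (z : ℝ) : R (n + 1) z + R n z = (2 * (n : ℝ) + 1) * P n z := by
  have main :
      (∑ k ∈ Finset.range (n + 2),
          (((n + 1).choose k : ℝ)) ^ 2 * k * (z - 1) ^ (n + 1 - k) * (z + 1) ^ (k - 1))
      + (∑ k ∈ Finset.range (n + 1),
          ((n.choose k : ℝ)) ^ 2 * k * (z - 1) ^ (n - k) * (z + 1) ^ (k - 1)) * 2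
      = (2 * (n : ℝ) + 1) *
        ∑ k ∈ Finset.range (n + 1),
          ((n.choose k : ℝ)) ^ 2 * (z - 1) ^ (n - k) * (z + 1) ^ k := by
    have s1 : (∑ k ∈ Finset.range (n + 2),
          (((n + 1).choose k : ℝ)) ^ 2 * k * (z - 1) ^ (n + 1 - k) * (z + 1) ^ (k - 1))
        = ∑ k ∈ Finset.range (n + 1),
          (((n + 1).choose (k + 1) : ℝ)) ^ 2 * ((k : ℝ) + 1) * (z - 1) ^ (n - k) * (z + 1) ^ k := by
      rw [Finset.sum_range_succ']
      simp only [Nat.cast_zero, mul_zero, zero_mul, add_zero, Nat.succ_sub_succ, Nat.sub_zero,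
        Nat.add_sub_cancel]
      apply Finset.sum_congr rfl
      intro k _
      push_cast
      ring
    have s3 : ∑ k ∈ Finset.range (n + 1),
          ((n.choose (k + 1) : ℝ)) ^ 2 * ((k : ℝ) + 1) * (z - 1) ^ (n - k) * (z + 1) ^ k
        = ∑ k ∈ Finset.range (n + 1),
          ((n.choose k : ℝ)) ^ 2 * k * (z - 1) ^ (n + 1 - k) * (z + 1) ^ (k - 1) := by
      rw [Finset.sum_range_succ, Finset.sum_range_succ']
      simp only [Nat.choose_succ_self, Nat.cast_zero, zero_pow, mul_zero, zero_mul, add_zero,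
        Nat.succ_sub_succ, Nat.sub_zero, Nat.add_sub_cancel, two_ne_zero, ne_eq, OfNat.ofNat_ne_zero,
        not_false_eq_true]
      apply Finset.sum_congr rfl
      intro k _
      push_cast
      ring
    have s2 : (∑ k ∈ Finset.range (n + 1),
          ((n.choose k : ℝ)) ^ 2 * k * (z - 1) ^ (n - k) * (z + 1) ^ (k - 1)) * 2
        = (∑ k ∈ Finset.range (n + 1),
            ((n.choose k : ℝ)) ^ 2 * k * (z - 1) ^ (n - k) * (z + 1) ^ k)
          - ∑ k ∈ Finset.range (n + 1),
            ((n.choose (k + 1) : ℝ)) ^ 2 * ((k : ℝ) + 1) * (z - 1) ^ (n - k) * (z + 1) ^ k := by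
      rw [s3, Finset.sum_mul, ← Finset.sum_sub_distrib]
      apply Finset.sum_congr rfl
      intro k hk
      have hkn : k ≤ n := Nat.lt_succ_iff.mp (Finset.mem_range.mp hk)
      have e2 : (k : ℝ) * (z + 1) ^ (k - 1) * (z + 1) = (k : ℝ) * (z + 1) ^ k :=
        pow_pred_mul _ _
      have e4 : (z - 1) ^ (n + 1 - k) = (z - 1) ^ (n - k) * (z - 1) := by
        rw [Nat.succ_sub hkn, pow_succ]
      rw [e4]
      linear_combination ((n.choose k : ℝ) ^ 2 * (z - 1) ^ (n - k)) * e2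
    rw [s1, s2, Finset.mul_sum]
    rw [← Finset.sum_sub_distrib, ← Finset.sum_add_distrib]
    apply Finset.sum_congr rfl
    intro k hk
    have hkn : k ≤ n := Nat.lt_succ_iff.mp (Finset.mem_range.mp hk)
    linear_combination ((z - 1) ^ (n - k) * (z + 1) ^ k) * key n k hkn
  have h2 : ((2 : ℝ) ^ n) ≠ 0 := by positivity
  have hsum : R (n + 1) z + R n z =
      ((∑ k ∈ Finset.range (n + 2),
          (((n + 1).choose k : ℝ)) ^ 2 * k * (z - 1) ^ (n + 1 - k) * (z + 1) ^ (k - 1))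
        + (∑ k ∈ Finset.range (n + 1),
          ((n.choose k : ℝ)) ^ 2 * k * (z - 1) ^ (n - k) * (z + 1) ^ (k - 1)) * 2) / 2 ^ n := by
    unfold R
    rw [pow_succ]
    field_simp
  rw [hsum, main]
  unfold P
  ring

lemma lemD (n : ℕ) (z : ℝ) :
    R n z = ∑ k ∈ Finset.range n, (-1 : ℝ) ^ (n + k + 1) * (2 * (k : ℝ) + 1) * P k z := by
  induction n with
  | zero => simp [R]
  | succ n ih =>
    have hb := lemB n z
    have h1 : R (n + 1) z = (2 * (n : ℝ) + 1) * P n z - R n z := by linarith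
    rw [h1, ih, Finset.sum_range_succ]
    have hs : ∑ k ∈ Finset.range n, (-1 : ℝ) ^ (n + 1 + k + 1) * (2 * (k : ℝ) + 1) * P k z
        = - ∑ k ∈ Finset.range n, (-1 : ℝ) ^ (n + k + 1) * (2 * (k : ℝ) + 1) * P k z := by
      rw [← Finset.sum_neg_distrib]
      apply Finset.sum_congr rfl
      intro k _
      rw [show n + 1 + k + 1 = (n + k + 1) + 1 from by ring, pow_succ]
      ring
    rw [hs]
    have hpow : (-1 : ℝ) ^ (n + 1 + n + 1) = 1 := by
      rw [show n + 1 + n + 1 = 2 * (n + 1) from by ring, pow_mul]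
      norm_num
    rw [hpow]
    ring

/-- For every natural number `n` and all real `z`,
`(z-1) P_n'(z) = n P_n(z) + ∑_{k=0}^{n-1} (-1)^{n+k} (2k+1) P_k(z)`. -/
theorem legendre_deriv_identity (n : ℕ) (z : ℝ) :
    (z - 1) * deriv (P n) z =
      (n : ℝ) * P n z +
        ∑ k ∈ Finset.range n, (-1 : ℝ) ^ (n + k) * (2 * (k : ℝ) + 1) * P k z := by
  rw [lemA, lemD]
  have hs : ∑ k ∈ Finset.range n, (-1 : ℝ) ^ (n + k + 1) * (2 * (k : ℝ) + 1) * P k z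
      = - ∑ k ∈ Finset.range n, (-1 : ℝ) ^ (n + k) * (2 * (k : ℝ) + 1) * P k z := by
    rw [← Finset.sum_neg_distrib]
    apply Finset.sum_congr rfl
    intro k _
    rw [pow_succ]
    ring
  rw [hs]
  ring
end

section
/- For every natural number n, the polynomial B_n satisfies the differential identity d/dz[(1-z^2) dB_n(z)/dz] + n(n+1) B_n(z) = 4[(z+1) dP_n(z)/dz - n P_n(z)] for all real z. -/
/-- `B_n(z) = 4(H_{2n} - H_n) P_n(z) + 4 ∑_{k=0}^{n-1} (2k+1)/((n-k)(n+k+1)) P_k(z)`. -/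
noncomputable def B (n : ℕ) (z : ℝ) : ℝ :=
  4 * (H (2 * n) - H n) * P n z +
    4 * ∑ k ∈ Finset.range n,
      (2 * (k : ℝ) + 1) / (((n : ℝ) - k) * ((n : ℝ) + k + 1)) * P k z

open Polynomial Finset

noncomputable def m (a b : ℕ) : ℝ[X] := (X - 1)^a * (X + 1)^b

lemma H1 (a b : ℕ) : derivative (m a b) =
    (a : ℝ[X]) * m (a-1) b + (b : ℝ[X]) * m a (b-1) := by
  rcases a with _|a <;> rcases b with _|b <;>
    · simp [m, derivative_pow, mul_comm, mul_assoc, mul_left_comm]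
      try ring

lemma H3 (a b : ℕ) : ((X:ℝ[X])^2 - 1) * m a b = m (a+1) (b+1) := by
  simp only [m]; ring

lemma H4 (a b : ℕ) : 2*(X:ℝ[X]) * m a b = m (a+1) b + m a (b+1) := by
  simp only [m]; ring

lemma H2 (a b : ℕ) : ((X:ℝ[X])^2 - 1) * derivative (derivative (m a b)) + 2*X*derivative (m a b)
    = (a:ℝ[X])^2 * m (a-1) (b+1) + (b:ℝ[X])^2 * m (a+1) (b-1)
      + ((2*a*b + a + b : ℕ) : ℝ[X]) * m a b := by
  rw [H1]
  simp only [derivative_add, derivative_mul, derivative_natCast, zero_mul, zero_add]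
  rw [H1, H1]
  rcases a with _|_|a <;> rcases b with _|_|b <;>
    · simp only [m, Nat.add_sub_cancel, Nat.succ_sub_one, Nat.zero_sub, Nat.sub_self,
        Nat.sub_zero, pow_zero, Nat.cast_zero, Nat.cast_ofNat, Nat.cast_succ, Nat.cast_add,
        Nat.cast_mul, Nat.cast_one, zero_mul, mul_zero, zero_add, add_zero, mul_one, one_mul]
      push_cast
      ring

noncomputable def cc (n k : ℕ) : ℝ := ((n.choose k : ℝ))^2
noncomputable def q (n : ℕ) : ℝ[X] := ∑ k ∈ range (n+1), C (cc n k) * m (n-k) k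

lemma hdq (n : ℕ) : derivative (q n) = ∑ k ∈ range (n+1),
    (C (((n-k : ℕ):ℝ) * cc n k) * m (n-k-1) k + C ((k:ℝ) * cc n k) * m (n-k) (k-1)) := by
  rw [q, derivative_sum]
  refine Finset.sum_congr rfl fun k hk => ?_
  rw [derivative_C_mul, H1, C_mul, C_mul, C_eq_natCast, C_eq_natCast]
  ring

lemma shiftA (n : ℕ) (f g : ℕ → ℝ) (h0 : g 0 = 0) (htop : f n = 0)
    (hfg : ∀ i, i < n → g (i+1) = f i) :
    ∑ k ∈ range (n+1), C (f k) * m (n-k-1) (k+1) = ∑ j ∈ range (n+1), C (g j) * m (n-j) j := by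
  rw [Finset.sum_range_succ, Finset.sum_range_succ' (fun j => C (g j) * m (n-j) j) n]
  rw [htop, h0]
  simp only [map_zero, zero_mul, add_zero]
  refine Finset.sum_congr rfl fun i hi => ?_
  rw [hfg i (mem_range.mp hi), show n - (i+1) = n - i - 1 by omega]

lemma shiftB (n : ℕ) (f g : ℕ → ℝ) (h0 : f 0 = 0) (htop : g n = 0)
    (hfg : ∀ i, i < n → g i = f (i+1)) :
    ∑ k ∈ range (n+1), C (f k) * m (n-k+1) (k-1) = ∑ j ∈ range (n+1), C (g j) * m (n-j) j := by
  rw [Finset.sum_range_succ' (fun k => C (f k) * m (n-k+1) (k-1)) n, Finset.sum_range_succ]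
  rw [htop, h0]
  simp only [map_zero, zero_mul, add_zero]
  refine Finset.sum_congr rfl fun i hi => ?_
  have hi' := mem_range.mp hi
  rw [hfg i hi', show n - (i+1) + 1 = n - i by omega, Nat.add_sub_cancel]

lemma shiftC (n : ℕ) (f : ℕ → ℝ) (htop : f n = 0) :
    ∑ k ∈ range (n+1), C (f k) * m (n-k-1+1) k = ∑ j ∈ range (n+1), C (f j) * m (n-j) j := by
  rw [Finset.sum_range_succ, Finset.sum_range_succ, htop]
  simp only [map_zero, zero_mul, add_zero]
  refine Finset.sum_congr rfl fun i hi => ?_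
  have hi' := mem_range.mp hi
  rw [show n - i - 1 + 1 = n - i by omega]

lemma mul2X (x y : ℕ) (c : ℝ) : 2*(X:ℝ[X]) * (C c * m x y) = C c * m (x+1) y + C c * m x (y+1) := by
  rw [show 2*(X:ℝ[X]) * (C c * m x y) = C c * (2*X*m x y) by ring, H4, mul_add]

lemma mulXX (x y : ℕ) (c : ℝ) : ((X:ℝ[X])^2-1) * (C c * m x y) = C c * m (x+1) (y+1) := by
  rw [show ((X:ℝ[X])^2-1) * (C c * m x y) = C c * (((X:ℝ[X])^2-1)*m x y) by ring, H3]

lemma shiftI (n : ℕ) (f : ℕ → ℝ) (h0 : f 0 = 0) :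
    ∑ k ∈ range (n+1), C (f k) * m (n-k) (k-1+1) = ∑ j ∈ range (n+1), C (f j) * m (n-j) j := by
  refine Finset.sum_congr rfl fun k _ => ?_
  rcases k with _|i
  · simp [h0]
  · rw [Nat.add_sub_cancel]

lemma shiftD (n : ℕ) (f : ℕ → ℝ) (htop : f (n+1) = 0) :
    ∑ k ∈ range (n+2), C (f k) * m (n+1-k-1) k = ∑ j ∈ range (n+1), C (f j) * m (n-j) j := by
  rw [Finset.sum_range_succ, htop]
  simp only [map_zero, zero_mul, add_zero]
  refine Finset.sum_congr rfl fun k _ => ?_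
  rw [show n+1-k-1 = n-k by omega]

lemma shiftE (n : ℕ) (f g : ℕ → ℝ) (h0 : f 0 = 0) (hfg : ∀ i, i ≤ n → g i = f (i+1)) :
    ∑ k ∈ range (n+2), C (f k) * m (n+1-k) (k-1) = ∑ j ∈ range (n+1), C (g j) * m (n-j) j := by
  rw [Finset.sum_range_succ' (fun k => C (f k) * m (n+1-k) (k-1)) (n+1), h0]
  simp only [map_zero, zero_mul, add_zero]
  refine Finset.sum_congr rfl fun i hi => ?_
  rw [hfg i (Nat.lt_succ_iff.mp (mem_range.mp hi)), show n+1-(i+1) = n-i by omega,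
    Nat.add_sub_cancel]

lemma shiftF (n : ℕ) (f g : ℕ → ℝ) (htop : f n = 0) (hg0 : g 0 = 0) (hgtop : g (n+1) = 0)
    (hfg : ∀ i, i < n → g (i+1) = f i) :
    ∑ k ∈ range (n+1), C (f k) * m (n-k-1+1) (k+1) = ∑ j ∈ range (n+2), C (g j) * m (n+1-j) j := by
  rw [Finset.sum_range_succ, htop, Finset.sum_range_succ, hgtop,
    Finset.sum_range_succ' (fun j => C (g j) * m (n+1-j) j) n, hg0]
  simp only [map_zero, zero_mul, add_zero]
  refine Finset.sum_congr rfl fun i hi => ?_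
  have hi' : i < n := mem_range.mp hi
  rw [hfg i hi', show n+1-(i+1) = n-i-1+1 by omega]

lemma shiftG (n : ℕ) (f g : ℕ → ℝ) (hgtop : g (n+1) = 0) (hfg : ∀ j, j ≤ n → g j = f j) :
    ∑ k ∈ range (n+1), C (f k) * m (n-k+1) k = ∑ j ∈ range (n+2), C (g j) * m (n+1-j) j := by
  rw [Finset.sum_range_succ (fun j => C (g j) * m (n+1-j) j), hgtop]
  simp only [map_zero, zero_mul, add_zero]
  refine Finset.sum_congr rfl fun k hk => ?_
  have hk' : k ≤ n := Nat.lt_succ_iff.mp (mem_range.mp hk)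
  rw [hfg k hk', show n+1-k = n-k+1 by omega]

lemma shiftG' (n : ℕ) (f g : ℕ → ℝ) (h0 : f 0 = 0) (hgtop : g (n+1) = 0)
    (hfg : ∀ j, j ≤ n → g j = f j) :
    ∑ k ∈ range (n+1), C (f k) * m (n-k+1) (k-1+1) = ∑ j ∈ range (n+2), C (g j) * m (n+1-j) j := by
  rw [Finset.sum_range_succ (fun j => C (g j) * m (n+1-j) j), hgtop]
  simp only [map_zero, zero_mul, add_zero]
  refine Finset.sum_congr rfl fun k hk => ?_
  have hk' : k ≤ n := Nat.lt_succ_iff.mp (mem_range.mp hk)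
  rcases k with _|i
  · simp [hfg 0 (Nat.zero_le n), h0]
  · rw [hfg (i+1) hk', Nat.add_sub_cancel, show n+1-(i+1) = n-(i+1)+1 by omega]

lemma shiftH (n : ℕ) (f g : ℕ → ℝ) (hg0 : g 0 = 0) (hfg : ∀ i, i ≤ n → g (i+1) = f i) :
    ∑ k ∈ range (n+1), C (f k) * m (n-k) (k+1) = ∑ j ∈ range (n+2), C (g j) * m (n+1-j) j := by
  rw [Finset.sum_range_succ' (fun j => C (g j) * m (n+1-j) j) (n+1), hg0]
  simp only [map_zero, zero_mul, add_zero]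
  refine Finset.sum_congr rfl fun i hi => ?_
  rw [hfg i (Nat.lt_succ_iff.mp (mem_range.mp hi)), show n+1-(i+1) = n-i by omega]

lemma castk1 (n i : ℕ) : ((i:ℝ)+1) * (n.choose (i+1) : ℝ) = ((n-i:ℕ):ℝ) * (n.choose i : ℝ) := by
  have h := Nat.choose_succ_right_eq n i
  have h' : ((n.choose (i+1) * (i+1) : ℕ) : ℝ) = ((n.choose i * (n-i) : ℕ):ℝ) := by
    exact_mod_cast congrArg (Nat.cast : ℕ → ℝ) h
  push_cast at h'
  linarith [h']

lemma castk3 (n i : ℕ) : ((n.choose (i+1)):ℝ) * ((n:ℝ)+1)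
    = (((n+1).choose (i+1)):ℝ) * ((n-i:ℕ):ℝ) := by
  have h := Nat.choose_mul_succ_eq n (i+1)
  have h' : ((n.choose (i+1) * (n+1) : ℕ) : ℝ) = (((n+1).choose (i+1) * (n+1-(i+1)) : ℕ):ℝ) := by
    exact_mod_cast congrArg (Nat.cast : ℕ → ℝ) h
  push_cast at h'
  exact_mod_cast h'

lemma pascal (n i : ℕ) : (((n+1).choose (i+1)):ℝ) = (n.choose i : ℝ) + (n.choose (i+1) : ℝ) := by
  exact_mod_cast congrArg (Nat.cast : ℕ → ℝ) (Nat.choose_succ_succ (n) (i))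

lemma idL2 (n j : ℕ) (hj : j ≤ n) :
    ((n+1-j:ℕ):ℝ) * cc (n+1) j + ((j+1:ℕ):ℝ) * cc (n+1) (j+1)
    = ((n-j:ℕ):ℝ)*cc n j + (if j = 0 then 0 else ((n-(j-1):ℕ):ℝ)*cc n (j-1))
      + ((j+1:ℕ):ℝ)*cc n (j+1) + (j:ℝ)*cc n j + 2*((n:ℝ)+1)*cc n j := by
  rcases j with _|i
  · simp only [if_pos rfl, Nat.sub_zero, Nat.cast_zero, zero_mul, add_zero, zero_add]
    simp only [cc, Nat.choose_zero_right, Nat.choose_one_right]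
    push_cast
    ring
  · have hi : i < n := hj
    simp only [if_neg (Nat.succ_ne_zero i), Nat.add_sub_cancel]
    have hs : ((n-i:ℕ):ℝ) = (n:ℝ) - i := Nat.cast_sub (le_of_lt hi)
    have hs1 : ((n-(i+1):ℕ):ℝ) = (n:ℝ) - i - 1 := by
      rw [Nat.cast_sub hj]; push_cast; ring
    have hs2 : ((n+1-(i+1):ℕ):ℝ) = (n:ℝ) - i := by
      rw [Nat.succ_sub_succ, hs]
    have k1 := castk1 n i
    have k2 := castk1 n (i+1)
    have p1 := pascal n i
    have p2 := pascal n (i+1)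
    simp only [cc]
    rw [hs2, hs1, hs, p1, p2]
    rw [hs] at k1
    rw [hs1] at k2
    push_cast at k2 ⊢
    linear_combination (-2*(n.choose (i+1):ℝ)) * k1 + (2*(n.choose (i+1):ℝ)) * k2

lemma idL3 (n j : ℕ) (hj : j ≤ n+1) :
    (if j = 0 then 0 else 2*(((n-(j-1):ℕ):ℝ)*cc n (j-1))) + 2*((j:ℝ)*cc n j)
      + (((n:ℝ)+1)*cc n j + (if j = 0 then 0 else ((n:ℝ)+1)*cc n (j-1)))
    = ((n:ℝ)+1)*cc (n+1) j := by
  rcases j with _|i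
  · simp [cc]
  · simp only [if_neg (Nat.succ_ne_zero i), Nat.add_sub_cancel]
    have k1 := castk1 n i
    have k3 := castk3 n i
    have p1 := pascal n i
    simp only [cc]
    rw [p1]
    rw [p1] at k3
    push_cast at k1 k3 ⊢
    linear_combination (-2*(n.choose i:ℝ)) * k3 + (2*(n.choose (i+1):ℝ)) * k1

lemma Cfuse2 (a : ℕ) (x : ℝ) : C (((a:ℕ):ℝ)^2 * x) = (a:ℝ[X])^2 * Polynomial.C x := by
  rw [C_mul, C_pow, C_eq_natCast]

lemma Cfuse1 (a : ℕ) (x : ℝ) : C (((a:ℕ):ℝ) * x) = (a:ℝ[X]) * Polynomial.C x := by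
  rw [C_mul, C_eq_natCast]

lemma rec1 (n i : ℕ) : ((i:ℝ)+1)^2 * cc n (i+1) = ((n-i : ℕ):ℝ)^2 * cc n i := by
  have h := Nat.choose_succ_right_eq n i
  have h' : ((n.choose (i+1) : ℕ) : ℝ) * ((i:ℝ)+1) = ((n.choose i : ℕ):ℝ) * ((n-i:ℕ):ℝ) := by
    exact_mod_cast congrArg (Nat.cast : ℕ → ℝ) h
  unfold cc
  linear_combination ((n.choose (i+1):ℝ) * ((i:ℝ)+1) + (n.choose i:ℝ) * ((n-i:ℕ):ℝ)) * h' 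

lemma L1 (n : ℕ) : ((X:ℝ[X])^2-1) * derivative (derivative (q n)) + 2*X*derivative (q n)
    = C ((n:ℝ)*((n:ℝ)+1)) * q n := by
  have key : ∀ k ∈ range (n+1),
      ((X:ℝ[X])^2-1) * derivative (derivative (C (cc n k) * m (n-k) k))
        + 2*X*derivative (C (cc n k) * m (n-k) k)
      = C (((n-k:ℕ):ℝ)^2 * cc n k) * m (n-k-1) (k+1)
        + C ((k:ℝ)^2 * cc n k) * m (n-k+1) (k-1)
        + C ((((2*(n-k)*k + (n-k) + k : ℕ)):ℝ) * cc n k) * m (n-k) k := by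
    intro k hk
    rw [derivative_C_mul, derivative_C_mul]
    have : ((X:ℝ[X])^2-1) * (C (cc n k) * derivative (derivative (m (n-k) k)))
        + 2*X*(C (cc n k) * derivative (m (n-k) k))
      = C (cc n k) * (((X:ℝ[X])^2-1) * derivative (derivative (m (n-k) k))
          + 2*X*derivative (m (n-k) k)) := by ring
    rw [this, H2, Cfuse2, Cfuse2, Cfuse1]
    ring
  rw [q, derivative_sum, derivative_sum, Finset.mul_sum, Finset.mul_sum,
    ← Finset.sum_add_distrib, Finset.sum_congr rfl key, Finset.sum_add_distrib,
    Finset.sum_add_distrib]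
  rw [shiftA n _ (fun j => (j:ℝ)^2 * cc n j) (by simp) (by simp [Nat.sub_self, cc])
      (fun i hi => by push_cast; exact rec1 n i)]
  rw [shiftB n _ (fun j => ((n-j:ℕ):ℝ)^2 * cc n j) (by simp) (by simp [Nat.sub_self])
      (fun i hi => by push_cast; exact (rec1 n i).symm)]
  rw [Finset.mul_sum, ← Finset.sum_add_distrib, ← Finset.sum_add_distrib]
  refine Finset.sum_congr rfl fun j hj => ?_
  have hj' : j ≤ n := Nat.lt_succ_iff.mp (mem_range.mp hj)
  rw [← mul_assoc (C ((n:ℝ)*((n:ℝ)+1))), ← C_mul, ← add_mul, ← add_mul, ← C_add, ← C_add]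
  congr 1
  have hc : ((n - j : ℕ) : ℝ) = (n:ℝ) - (j:ℝ) := by
    exact Nat.cast_sub hj'
  push_cast [hc]
  ring

lemma C2 (x : ℝ) : C (2*x) = 2 * Polynomial.C x := by
  rw [C_mul, map_ofNat]

lemma L2 (n : ℕ) : derivative (q (n+1)) = 2*X*derivative (q n) + C (2*((n:ℝ)+1)) * q n := by
  rw [hdq (n+1), hdq n, q, Finset.mul_sum, Finset.mul_sum]
  have e1 : ∀ k ∈ range (n+1),
      2*(X:ℝ[X]) * (C (((n-k:ℕ):ℝ) * cc n k) * m (n-k-1) k + C ((k:ℝ) * cc n k) * m (n-k) (k-1))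
      = (C (((n-k:ℕ):ℝ) * cc n k) * m (n-k-1+1) k + C (((n-k:ℕ):ℝ) * cc n k) * m (n-k-1) (k+1))
        + (C ((k:ℝ) * cc n k) * m (n-k+1) (k-1) + C ((k:ℝ) * cc n k) * m (n-k) (k-1+1)) := by
    intro k _
    rw [mul_add, mul2X, mul2X]
  have e2 : ∀ k ∈ range (n+1), C (2*((n:ℝ)+1)) * (C (cc n k) * m (n-k) k)
      = C (2*((n:ℝ)+1) * cc n k) * m (n-k) k := by
    intro k _; rw [← mul_assoc, ← C_mul]
  rw [Finset.sum_congr rfl e1, Finset.sum_congr rfl e2]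
  simp only [Finset.sum_add_distrib]
  rw [shiftD n _ (by simp),
      shiftE n _ (fun j => ((j+1:ℕ):ℝ) * cc (n+1) (j+1)) (by simp) (fun i _ => rfl),
      shiftC n _ (by simp),
      shiftA n _ (fun j => if j = 0 then 0 else ((n-(j-1):ℕ):ℝ) * cc n (j-1)) (by simp) (by simp)
        (fun i hi => by simp),
      shiftB n _ (fun j => ((j+1:ℕ):ℝ) * cc n (j+1)) (by simp)
        (by simp [cc, Nat.choose_succ_self]) (fun i hi => rfl),
      shiftI n _ (by simp)]
  simp only [← Finset.sum_add_distrib]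
  refine Finset.sum_congr rfl fun j hj => ?_
  have hj' : j ≤ n := Nat.lt_succ_iff.mp (mem_range.mp hj)
  simp only [← add_mul, ← C_add]
  refine congrArg (fun t => C t * m (n-j) j) ?_
  have h := idL2 n j hj'
  linarith [h]

lemma L3 (n : ℕ) : 2*(((X:ℝ[X])^2-1) * derivative (q n)) + C ((n:ℝ)+1) * (2*X*q n)
    = C ((n:ℝ)+1) * q (n+1) := by
  rw [hdq n]
  simp only [q]
  rw [Finset.mul_sum, Finset.mul_sum, Finset.mul_sum, Finset.mul_sum, Finset.mul_sum]
  have e1 : ∀ k ∈ range (n+1),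
      2*(((X:ℝ[X])^2-1) * (C (((n-k:ℕ):ℝ) * cc n k) * m (n-k-1) k + C ((k:ℝ) * cc n k) * m (n-k) (k-1)))
      = C (2*(((n-k:ℕ):ℝ) * cc n k)) * m (n-k-1+1) (k+1) + C (2*((k:ℝ) * cc n k)) * m (n-k+1) (k-1+1) := by
    intro k _
    rw [mul_add, mulXX, mulXX, mul_add, C2, C2]
    ring
  have e2 : ∀ k ∈ range (n+1), C ((n:ℝ)+1) * (2*(X:ℝ[X]) * (C (cc n k) * m (n-k) k))
      = C (((n:ℝ)+1) * cc n k) * m (n-k+1) k + C (((n:ℝ)+1) * cc n k) * m (n-k) (k+1) := by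
    intro k _
    rw [mul2X, mul_add, ← mul_assoc, ← C_mul, ← mul_assoc, ← C_mul]
  have e3 : ∀ k ∈ range (n+1+1), C ((n:ℝ)+1) * (C (cc (n+1) k) * m (n+1-k) k)
      = C (((n:ℝ)+1) * cc (n+1) k) * m (n+1-k) k := by
    intro k _; rw [← mul_assoc, ← C_mul]
  rw [Finset.sum_congr rfl e1, Finset.sum_congr rfl e2, Finset.sum_congr rfl e3]
  simp only [Finset.sum_add_distrib]
  rw [shiftF n _ (fun j => if j = 0 then 0 else 2*(((n-(j-1):ℕ):ℝ) * cc n (j-1))) (by simp)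
        (by simp) (by simp) (fun i hi => by simp),
      shiftG' n _ (fun j => 2*((j:ℝ) * cc n j)) (by simp)
        (by simp [cc, Nat.choose_succ_self]) (fun j hj => rfl),
      shiftG n _ (fun j => ((n:ℝ)+1) * cc n j) (by simp [cc, Nat.choose_succ_self])
        (fun j hj => rfl),
      shiftH n _ (fun j => if j = 0 then 0 else ((n:ℝ)+1) * cc n (j-1)) (by simp)
        (fun i hi => by simp)]
  simp only [← Finset.sum_add_distrib]
  refine Finset.sum_congr rfl fun j hj => ?_
  have hj' : j ≤ n+1 := Nat.lt_succ_iff.mp (mem_range.mp hj)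
  simp only [← add_mul, ← C_add]
  refine congrArg (fun t => C t * m (n+1-j) j) ?_
  have h := idL3 n j hj'
  linarith [h]

noncomputable def Pp (n : ℕ) : ℝ[X] := C (((2:ℝ)^n)⁻¹) * q n

lemma h2inv (n : ℕ) : (C (((2:ℝ)^(n+1))⁻¹) : ℝ[X]) * 2 = C (((2:ℝ)^n)⁻¹) := by
  have h : ((2:ℝ)^(n+1))⁻¹ * 2 = ((2:ℝ)^n)⁻¹ := by
    rw [pow_succ, mul_inv]
    field_simp
  calc (C (((2:ℝ)^(n+1))⁻¹) : ℝ[X]) * 2 = C (((2:ℝ)^(n+1))⁻¹) * C 2 := by rw [map_ofNat]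
    _ = C (((2:ℝ)^(n+1))⁻¹ * 2) := (C_mul).symm
    _ = C (((2:ℝ)^n)⁻¹) := by rw [h]

lemma C2' (x : ℝ) : C (2*x) = 2 * Polynomial.C x := by
  rw [C_mul, map_ofNat]

lemma hA (n : ℕ) : derivative (Pp (n+1)) = X * derivative (Pp n) + C ((n:ℝ)+1) * Pp n := by
  rw [Pp, Pp, derivative_C_mul, derivative_C_mul, L2, C2']
  linear_combination (X * derivative (q n) + C ((n:ℝ)+1) * q n) * h2inv n

lemma hB (n : ℕ) : ((X:ℝ[X])^2 - 1) * derivative (Pp n) = C ((n:ℝ)+1) * (Pp (n+1) - X * Pp n) := by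
  rw [Pp, Pp, derivative_C_mul]
  linear_combination (C (((2:ℝ)^(n+1))⁻¹)) * L3 n
    - ((((X:ℝ[X])^2-1) * derivative (q n) + C ((n:ℝ)+1) * (X * q n))) * h2inv n

lemma L4 : ∀ n : ℕ, (X+1) * derivative (Pp n) - C ((n:ℝ)) * Pp n
    = ∑ k ∈ range n, C (2*(k:ℝ)+1) * Pp k := by
  intro n
  induction n with
  | zero => simp [Pp, q, cc, m]
  | succ n ih =>
    rw [Finset.sum_range_succ, ← ih]
    have hcast : ((n+1:ℕ):ℝ) = (n:ℝ)+1 := by push_cast; ring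
    rw [hcast]
    have hcc : C (2*(n:ℝ)+1) = C ((n:ℝ)) + C ((n:ℝ)+1) := by
      rw [← C_add]; exact congrArg C (by ring)
    linear_combination (X+1) * hA n + hB n - (Pp n) * hcc

noncomputable def LOp (p : ℝ[X]) : ℝ[X] := derivative ((1 - X^2) * derivative p)

lemma LOp_add (p r : ℝ[X]) : LOp (p + r) = LOp p + LOp r := by
  simp [LOp, mul_add]

lemma LOp_Cmul (c : ℝ) (p : ℝ[X]) : LOp (C c * p) = C c * LOp p := by
  rw [LOp, LOp, derivative_C_mul, mul_left_comm, derivative_C_mul]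

lemma LOp_sum {ι : Type*} (s : Finset ι) (f : ι → ℝ[X]) : LOp (∑ i ∈ s, f i) = ∑ i ∈ s, LOp (f i) := by
  simp [LOp, Finset.mul_sum]

lemma L5 (n : ℕ) : LOp (Pp n) = -(C ((n:ℝ)*((n:ℝ)+1)) * Pp n) := by
  have hop : LOp (Pp n) = -(((X:ℝ[X])^2-1) * derivative (derivative (Pp n))) - 2*X*derivative (Pp n) := by
    rw [LOp, derivative_mul]
    simp only [derivative_sub, derivative_one, derivative_pow, derivative_X, Nat.cast_ofNat,
      pow_one, mul_one, zero_sub, map_ofNat]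
    ring
  rw [hop, Pp, derivative_C_mul, derivative_C_mul]
  linear_combination (-(C (((2:ℝ)^n)⁻¹))) * L1 n

noncomputable def Bp (n : ℕ) : ℝ[X] := C (4*(H (2*n) - H n)) * Pp n
  + C 4 * ∑ k ∈ range n, C ((2*(k:ℝ)+1) / (((n:ℝ) - k) * ((n:ℝ) + k + 1))) * Pp k

lemma L6 (n : ℕ) : LOp (Bp n) + C ((n:ℝ)*((n:ℝ)+1)) * Bp n
    = C 4 * ((X+1) * derivative (Pp n) - C ((n:ℝ)) * Pp n) := by
  have key : ∀ k ∈ range n,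
      C ((2*(k:ℝ)+1) / (((n:ℝ) - k) * ((n:ℝ) + k + 1))) * LOp (Pp k)
        + C ((n:ℝ)*((n:ℝ)+1)) * (C ((2*(k:ℝ)+1) / (((n:ℝ) - k) * ((n:ℝ) + k + 1))) * Pp k)
      = C (2*(k:ℝ)+1) * Pp k := by
    intro k hk
    have hk' : (k:ℝ) < (n:ℝ) := by exact_mod_cast mem_range.mp hk
    rw [L5 k]
    have hb : (2*(k:ℝ)+1) / (((n:ℝ) - k) * ((n:ℝ) + k + 1)) * ((n:ℝ)*((n:ℝ)+1) - (k:ℝ)*((k:ℝ)+1))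
        = 2*(k:ℝ)+1 := by
      have h1 : (n:ℝ) - k > 0 := by linarith
      have h2 : (n:ℝ) + k + 1 > 0 := by positivity
      rw [div_mul_eq_mul_div, div_eq_iff (mul_ne_zero (ne_of_gt h1) (ne_of_gt h2))]
      ring
    have hb' : C ((2*(k:ℝ)+1) / (((n:ℝ) - k) * ((n:ℝ) + k + 1)))
        * (C ((n:ℝ)*((n:ℝ)+1)) - C ((k:ℝ)*((k:ℝ)+1))) = C (2*(k:ℝ)+1) := by
      rw [← C_sub, ← C_mul, hb]
    linear_combination (Pp k) * hb'
  rw [L4 n, Finset.sum_congr rfl (fun k hk => (key k hk).symm)]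
  simp only [Bp, LOp_add, LOp_Cmul, LOp_sum]
  rw [L5 n]
  conv_rhs => rw [Finset.sum_add_distrib, ← Finset.mul_sum]
  ring

lemma Pp_eval (n : ℕ) (z : ℝ) : (Pp n).eval z = P n z := by
  simp only [Pp, q, m, cc, eval_mul, eval_C, eval_finset_sum, eval_pow, eval_sub, eval_add,
    eval_one, eval_X]
  rw [P, div_eq_inv_mul]
  congr 1
  exact Finset.sum_congr rfl fun k _ => by ring

lemma Bp_eval (n : ℕ) (z : ℝ) : (Bp n).eval z = B n z := by
  simp only [Bp, eval_add, eval_mul, eval_C, eval_finset_sum]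
  rw [B]
  congr 1
  · rw [Pp_eval]
  · congr 1
    exact Finset.sum_congr rfl fun k _ => by rw [Pp_eval]

/-- For every natural number `n` and all real `z`,
`d/dz[(1-z²) B_n'(z)] + n(n+1) B_n(z) = 4[(z+1) P_n'(z) - n P_n(z)]`. -/
theorem B_differential_identity (n : ℕ) (z : ℝ) :
    deriv (fun z => (1 - z ^ 2) * deriv (B n) z) z + (n : ℝ) * ((n : ℝ) + 1) * B n z =
      4 * ((z + 1) * deriv (P n) z - (n : ℝ) * P n z) := by
  have hBfun : B n = fun t => (Bp n).eval t := funext fun t => (Bp_eval n t).symm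
  have hPfun : P n = fun t => (Pp n).eval t := funext fun t => (Pp_eval n t).symm
  rw [hBfun, hPfun]
  have h1 : (fun z => (1 - z ^ 2) * deriv (fun t => (Bp n).eval t) z)
      = fun z => ((1 - X^2) * derivative (Bp n)).eval z := by
    funext t
    rw [Polynomial.deriv]
    simp [eval_mul, eval_sub, eval_one, eval_pow, eval_X]
  rw [h1, Polynomial.deriv, Polynomial.deriv]
  have h6 := congrArg (fun p : ℝ[X] => p.eval z) (L6 n)
  simp only [LOp, eval_add, eval_mul, eval_C, eval_sub, eval_X, eval_one] at h6
  linarith [h6]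
end
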